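/- Let p(x) denote the simplified barycentric formula at Chebyshev points: p(x) = Σ'_{j=0}^n (−1)^j v_j/(x−x_j) / Σ'_{j=0}^n (−1)^j/(x−x_j) with x_j = cos(jπ/n). Then for each node x_i, the limit of p(x) as x → x_i (with x off the grid) equals v_i. -/

import Mathlib

open Real Finset Filter Topology

theorem barycentric_formula_tendsto_node_value (n : ℕ) (hn : 1 ≤ n) (v : ℕ → ℝ)
    (i : ℕ) (hi : i ≤ n) :
    Filter.Tendsto
      (fun x : ℝ =>
        (∑ j ∈ Finset.range (n + 1),
            (if j = 0 ∨ j = n then (1 / 2 : ℝ) else 1) * ((-1 : ℝ) ^ j * v j) /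
              (x - Real.cos (j * Real.pi / n))) /
          (∑ j ∈ Finset.range (n + 1),
            (if j = 0 ∨ j = n then (1 / 2 : ℝ) else 1) * (-1 : ℝ) ^ j /
              (x - Real.cos (j * Real.pi / n))))
      (nhdsWithin (Real.cos (i * Real.pi / n))
        {x : ℝ | x ∈ Set.Ioo (-1 : ℝ) 1 ∧ ∀ j ≤ n, x ≠ Real.cos (j * Real.pi / n)})
      (nhds (v i)) := by
  have hnpos : (0:ℝ) < (n:ℝ) := by exact_mod_cast hn
  set xi := Real.cos (i * Real.pi / n) with hxidef
  set L := nhdsWithin xi {x : ℝ | x ∈ Set.Ioo (-1 : ℝ) 1 ∧ ∀ j ≤ n, x ≠ Real.cos (j * Real.pi / n)} with hL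
  set c : ℕ → ℝ := fun j => (if j = 0 ∨ j = n then (1 / 2 : ℝ) else 1) * (-1)^j with hc
  have hcne : ∀ j, c j ≠ 0 := by
    intro j
    simp only [hc]
    apply mul_ne_zero
    · split <;> norm_num
    · exact pow_ne_zero _ (by norm_num)
  have hmem : ∀ j ≤ n, (j:ℝ) * Real.pi / n ∈ Set.Icc 0 Real.pi := by
    intro j hj
    constructor
    · positivity
    · rw [div_le_iff₀ hnpos]
      have : (j:ℝ) ≤ n := by exact_mod_cast hj
      nlinarith [Real.pi_pos]
  have hne : ∀ j ≤ n, j ≠ i → Real.cos ((j:ℝ) * Real.pi / n) ≠ xi := by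
    intro j hj hji h
    apply hji
    have h2 := Real.injOn_cos (hmem j hj) (hmem i hi) h
    have hπ : Real.pi ≠ 0 := Real.pi_ne_zero
    rw [div_left_inj' hnpos.ne', mul_left_inj' hπ] at h2
    exact_mod_cast h2
  -- key limits
  have key : ∀ j ≤ n, Tendsto (fun x : ℝ => (x - xi) / (x - Real.cos ((j:ℝ) * Real.pi / n)))
      L (nhds (if j = i then 1 else 0)) := by
    intro j hj
    by_cases hji : j = i
    · subst hji
      simp only [if_pos rfl]
      apply Tendsto.congr' (f₁ := fun _ => (1:ℝ))
      · filter_upwards [self_mem_nhdsWithin] with x hx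
        have hxne : x ≠ xi := hx.2 j hj
        rw [div_self (sub_ne_zero.mpr hxne)]
      · exact tendsto_const_nhds
    · simp only [if_neg hji]
      have h1 : Tendsto (fun x : ℝ => x - xi) L (nhds 0) := by
        have h : Tendsto (fun x : ℝ => x - xi) (nhds xi) (nhds (xi - xi)) :=
          (continuous_id.sub continuous_const).tendsto xi
        rw [sub_self] at h
        exact h.mono_left nhdsWithin_le_nhds
      have h2 : Tendsto (fun x : ℝ => x - Real.cos ((j:ℝ) * Real.pi / n)) L
          (nhds (xi - Real.cos ((j:ℝ) * Real.pi / n))) :=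
        ((continuous_id.sub continuous_const).tendsto xi).mono_left nhdsWithin_le_nhds
      have hden : xi - Real.cos ((j:ℝ) * Real.pi / n) ≠ 0 :=
        sub_ne_zero.mpr (fun h => hne j hj hji h.symm)
      have h3 := h1.div h2 hden
      rw [zero_div] at h3
      exact h3
  have hA : Tendsto (fun x : ℝ => ∑ j ∈ Finset.range (n+1),
      (c j * v j) * ((x - xi) / (x - Real.cos ((j:ℝ) * Real.pi / n)))) L (nhds (c i * v i)) := by
    have h := tendsto_finset_sum (Finset.range (n+1)) (fun j hj =>
      ((key j (Nat.lt_succ_iff.mp (Finset.mem_range.mp hj))).const_mul (c j * v j)))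
    have hsum : ∑ j ∈ Finset.range (n+1), (c j * v j) * (if j = i then (1:ℝ) else 0) = c i * v i := by
      rw [Finset.sum_eq_single i]
      · simp
      · intro j _ hji; simp [hji]
      · intro h; exact absurd (Finset.mem_range.mpr (Nat.lt_succ_of_le hi)) h
    rwa [hsum] at h
  have hB : Tendsto (fun x : ℝ => ∑ j ∈ Finset.range (n+1),
      (c j) * ((x - xi) / (x - Real.cos ((j:ℝ) * Real.pi / n)))) L (nhds (c i)) := by
    have h := tendsto_finset_sum (Finset.range (n+1)) (fun j hj =>
      ((key j (Nat.lt_succ_iff.mp (Finset.mem_range.mp hj))).const_mul (c j)))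
    have hsum : ∑ j ∈ Finset.range (n+1), (c j) * (if j = i then (1:ℝ) else 0) = c i := by
      rw [Finset.sum_eq_single i]
      · simp
      · intro j _ hji; simp [hji]
      · intro h; exact absurd (Finset.mem_range.mpr (Nat.lt_succ_of_le hi)) h
    rwa [hsum] at h
  have hAB := hA.div hB (hcne i)
  have hval : c i * v i / c i = v i := by
    rw [mul_comm, mul_div_assoc, div_self (hcne i), mul_one]
  rw [hval] at hAB
  apply hAB.congr'
  filter_upwards [self_mem_nhdsWithin] with x hx
  have hxne : x - xi ≠ 0 := sub_ne_zero.mpr (hx.2 i hi)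
  have e1 : ∑ j ∈ Finset.range (n+1), (c j * v j) * ((x - xi) / (x - Real.cos ((j:ℝ) * Real.pi / n)))
      = (∑ j ∈ Finset.range (n+1),
          (if j = 0 ∨ j = n then (1 / 2 : ℝ) else 1) * ((-1 : ℝ) ^ j * v j) /
            (x - Real.cos (j * Real.pi / n))) * (x - xi) := by
    rw [Finset.sum_mul]
    refine Finset.sum_congr rfl fun j _ => ?_
    simp only [hc]; ring
  have e2 : ∑ j ∈ Finset.range (n+1), (c j) * ((x - xi) / (x - Real.cos ((j:ℝ) * Real.pi / n)))
      = (∑ j ∈ Finset.range (n+1),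
          (if j = 0 ∨ j = n then (1 / 2 : ℝ) else 1) * (-1 : ℝ) ^ j /
            (x - Real.cos (j * Real.pi / n))) * (x - xi) := by
    rw [Finset.sum_mul]
    refine Finset.sum_congr rfl fun j _ => ?_
    simp only [hc]; ring
  simp only [Pi.div_apply]
  rw [e1, e2, mul_div_mul_right _ _ hxne]
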